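/- Let F be a tree topology on [N] with exactly two maximal clades S1 and S2. If F is full dimensional (|F| = N − 2), then S1 and S2 are disjoint and S1 ∪ S2 = [N]. -/

import Mathlib

open Finset

lemma laminar_card_bound {N : ℕ} :
    ∀ (n : ℕ) (S : Finset (Fin N)) (L : Finset (Finset (Fin N))),
      S.card ≤ n →
      (∀ A ∈ L, ∀ B ∈ L, A ≠ B → A ⊂ B ∨ B ⊂ A ∨ A ∩ B = ∅) →
      (∀ A ∈ L, 2 ≤ A.card ∧ A ⊆ S) →
      L.card ≤ S.card - 1 := by
  intro n
  induction n with
  | zero =>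
      intro S L hS hlam hmem
      rcases L.eq_empty_or_nonempty with rfl | ⟨A, hA⟩
      · simp
      · obtain ⟨h2, hAS⟩ := hmem A hA
        have := (card_le_card hAS).trans hS
        omega
  | succ n ih =>
      intro S L hS hlam hmem
      classical
      set L' := L.erase S with hL'def
      have hL'sub : L' ⊆ L := erase_subset _ _
      have hL'mem : ∀ A ∈ L', 2 ≤ A.card ∧ A ⊂ S := by
        intro A hA
        obtain ⟨h2, hAS⟩ := hmem A (hL'sub hA)
        exact ⟨h2, ssubset_of_ne_of_subset (ne_of_mem_erase hA) hAS⟩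
      set M := L'.filter (fun A => ∀ B ∈ L', ¬ A ⊂ B) with hMdef
      have hMsub : M ⊆ L' := filter_subset _ _
      have hcover : ∀ B ∈ L', ∃ A ∈ M, B ⊆ A := by
        intro B hB
        obtain ⟨m, hm, hmax⟩ : ∃ m ∈ L'.filter (fun C => B ⊆ C), ∀ x ∈ L'.filter (fun C => B ⊆ C), ¬ m < x := by
          obtain ⟨m, hm⟩ := Finset.exists_maximal
            (show (L'.filter (fun C => B ⊆ C)).Nonempty from ⟨B, by simp [hB]⟩)
          exact ⟨m, hm.1, fun x hx hlt => not_lt_of_ge (hm.2 hx hlt.le) hlt⟩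
        simp only [mem_filter] at hm
        refine ⟨m, ?_, hm.2⟩
        simp only [hMdef, mem_filter]
        refine ⟨hm.1, fun B' hB' hss => ?_⟩
        exact hmax B' (by simp [hB', hm.2.trans hss.subset]) hss
      have hL'cover : L' ⊆ M.biUnion (fun A => L'.filter (· ⊆ A)) := by
        intro B hB
        obtain ⟨A, hA, hBA⟩ := hcover B hB
        exact mem_biUnion.2 ⟨A, hA, by simp [hB, hBA]⟩
      have hpiece : ∀ A ∈ M, (L'.filter (· ⊆ A)).card ≤ A.card - 1 := by
        intro A hA
        have hAS : A ⊂ S := (hL'mem A (hMsub hA)).2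
        have hAn : A.card ≤ n := by
          have := card_lt_card hAS
          omega
        refine ih A (L'.filter (· ⊆ A)) hAn ?_ ?_
        · intro X hX Y hY hXY
          exact hlam X (hL'sub (mem_of_mem_filter _ hX)) Y
            (hL'sub (mem_of_mem_filter _ hY)) hXY
        · intro X hX
          simp only [mem_filter] at hX
          exact ⟨(hL'mem X hX.1).1, hX.2⟩
      have hL'card : L'.card ≤ ∑ A ∈ M, (A.card - 1) := by
        calc L'.card ≤ (M.biUnion (fun A => L'.filter (· ⊆ A))).card :=
              card_le_card hL'cover
          _ ≤ ∑ A ∈ M, (L'.filter (· ⊆ A)).card := card_biUnion_le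
          _ ≤ ∑ A ∈ M, (A.card - 1) := sum_le_sum hpiece
      -- key bound: L'.card ≤ S.card - 2
      have hkey : L'.card ≤ S.card - 2 := by
        rcases Nat.lt_or_ge M.card 2 with hM2 | hM2
        · interval_cases h : M.card
          · -- M empty, so L' empty
            have hMe : M = ∅ := card_eq_zero.1 h
            have : L' = ∅ := by
              rcases L'.eq_empty_or_nonempty with h' | ⟨B, hB⟩
              · exact h'
              · obtain ⟨A, hA, _⟩ := hcover B hB
                simp [hMe] at hA
            simp [this]
          · -- M singleton
            obtain ⟨A, hA⟩ := card_eq_one.1 h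
            have hAM : A ∈ M := by simp [hA]
            have hAS : A ⊂ S := (hL'mem A (hMsub hAM)).2
            have h1 : L'.card ≤ A.card - 1 := by
              have := hL'card
              rw [hA, sum_singleton] at this
              exact this
            have := card_lt_card hAS
            omega
        · -- M.card ≥ 2
          have hdisjM : ∀ A ∈ M, ∀ B ∈ M, A ≠ B → Disjoint A B := by
            intro A hA B hB hAB
            rcases hlam A (hL'sub (hMsub hA)) B (hL'sub (hMsub hB)) hAB with h | h | h
            · exact absurd h ((mem_filter.1 hA).2 B (hMsub hB))
            · exact absurd h ((mem_filter.1 hB).2 A (hMsub hA))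
            · exact disjoint_iff_inter_eq_empty.2 h
          have hsumM : ∑ A ∈ M, A.card ≤ S.card := by
            rw [← card_biUnion hdisjM]
            apply card_le_card
            intro x hx
            obtain ⟨A, hA, hxA⟩ := mem_biUnion.1 hx
            exact (hL'mem A (hMsub hA)).2.subset hxA
          have hsumeq : ∑ A ∈ M, (A.card - 1) + M.card = ∑ A ∈ M, A.card := by
            rw [card_eq_sum_ones M, ← Finset.sum_add_distrib]
            exact Finset.sum_congr rfl fun A hA => by
              have := (hL'mem A (hMsub hA)).1; omega
          omega
      -- conclude
      have hLcard : L.card ≤ L'.card + 1 := by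
        have : L ⊆ insert S L' := by
          intro A hA
          rcases eq_or_ne A S with rfl | h
          · exact mem_insert_self _ _
          · exact mem_insert_of_mem (mem_erase.2 ⟨h, hA⟩)
        exact (card_le_card this).trans (card_insert_le _ _)
      rcases Finset.decidableMem S L |>.em with hSL | hSL
      · have h2 : 2 ≤ S.card := (hmem S hSL).1
        omega
      · have : L' = L := erase_eq_of_notMem hSL
        rw [← this]
        omega

theorem two_maximal_clades {N : ℕ}
    (F : Finset (Finset (Fin N)))
    (hcard : ∀ S ∈ F, 2 ≤ S.card ∧ S.card ≤ N - 1)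
    (hnest : ∀ S₁ ∈ F, ∀ S₂ ∈ F, S₁ ≠ S₂ →
      S₁ ⊂ S₂ ∨ S₂ ⊂ S₁ ∨ S₁ ∩ S₂ = ∅)
    (S₁ S₂ : Finset (Fin N)) (h₁ : S₁ ∈ F) (h₂ : S₂ ∈ F) (hne : S₁ ≠ S₂)
    (hmax₁ : ∀ T ∈ F, ¬ S₁ ⊂ T) (hmax₂ : ∀ T ∈ F, ¬ S₂ ⊂ T)
    (honly : ∀ S ∈ F, (∀ T ∈ F, ¬ S ⊂ T) → S = S₁ ∨ S = S₂)
    (hfull : F.card = N - 2) :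
    S₁ ∩ S₂ = ∅ ∧ S₁ ∪ S₂ = Finset.univ := by
  classical
  have hdisj : S₁ ∩ S₂ = ∅ := by
    rcases hnest S₁ h₁ S₂ h₂ hne with h | h | h
    · exact absurd h (hmax₁ S₂ h₂)
    · exact absurd h (hmax₂ S₁ h₁)
    · exact h
  refine ⟨hdisj, ?_⟩
  have hmaxabove : ∀ S ∈ F, S ⊆ S₁ ∨ S ⊆ S₂ := by
    intro S hS
    obtain ⟨m, hm, hmax⟩ : ∃ m ∈ F.filter (fun C => S ⊆ C), ∀ x ∈ F.filter (fun C => S ⊆ C), ¬ m < x := by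
      obtain ⟨m, hm⟩ := Finset.exists_maximal
        (show (F.filter (fun C => S ⊆ C)).Nonempty from ⟨S, by simp [hS]⟩)
      exact ⟨m, hm.1, fun x hx hlt => not_lt_of_ge (hm.2 hx hlt.le) hlt⟩
    simp only [Finset.mem_filter] at hm
    have hmmax : ∀ T ∈ F, ¬ m ⊂ T := by
      intro T hT hsub
      exact hmax T (by simp [hT, hm.2.trans hsub.subset]) hsub
    rcases honly m hm.1 hmmax with rfl | rfl
    · exact Or.inl hm.2
    · exact Or.inr hm.2
  have hFcover : F ⊆ F.filter (· ⊆ S₁) ∪ F.filter (· ⊆ S₂) := by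
    intro S hS
    rcases hmaxabove S hS with h | h
    · exact Finset.mem_union_left _ (Finset.mem_filter.2 ⟨hS, h⟩)
    · exact Finset.mem_union_right _ (Finset.mem_filter.2 ⟨hS, h⟩)
  have hb1 : (F.filter (· ⊆ S₁)).card ≤ S₁.card - 1 := by
    refine laminar_card_bound S₁.card S₁ _ le_rfl ?_ ?_
    · intro X hX Y hY hXY
      exact hnest X (Finset.mem_of_mem_filter _ hX) Y (Finset.mem_of_mem_filter _ hY) hXY
    · intro X hX
      have := Finset.mem_filter.1 hX
      exact ⟨(hcard X this.1).1, this.2⟩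
  have hb2 : (F.filter (· ⊆ S₂)).card ≤ S₂.card - 1 := by
    refine laminar_card_bound S₂.card S₂ _ le_rfl ?_ ?_
    · intro X hX Y hY hXY
      exact hnest X (Finset.mem_of_mem_filter _ hX) Y (Finset.mem_of_mem_filter _ hY) hXY
    · intro X hX
      have := Finset.mem_filter.1 hX
      exact ⟨(hcard X this.1).1, this.2⟩
  have hFb : F.card ≤ (S₁.card - 1) + (S₂.card - 1) := by
    calc F.card ≤ (F.filter (· ⊆ S₁) ∪ F.filter (· ⊆ S₂)).card :=
          Finset.card_le_card hFcover
      _ ≤ (F.filter (· ⊆ S₁)).card + (F.filter (· ⊆ S₂)).card := Finset.card_union_le _ _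
      _ ≤ (S₁.card - 1) + (S₂.card - 1) := Nat.add_le_add hb1 hb2
  have hc1 := hcard S₁ h₁
  have hc2 := hcard S₂ h₂
  have hucard : (S₁ ∪ S₂).card = S₁.card + S₂.card :=
    Finset.card_union_of_disjoint (Finset.disjoint_iff_inter_eq_empty.2 hdisj)
  have hle : (S₁ ∪ S₂).card ≤ N := by
    simpa using Finset.card_le_univ (S₁ ∪ S₂)
  apply Finset.eq_univ_of_card
  simp only [Fintype.card_fin]
  omega
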